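/- Let p : ZMod n → ℕ be an admissible sequence, C the Cartan matrix with C(a,b) = #{0 ≤ i < p(a) : a+i = b}, viewed over ℚ, and let p̄ be the common length and w the common weight of the cycles of γ(a) = a + p(a). Then C admits a weighting and a coweighting over ℚ, and its magnitude equals p̄ / w. -/

import Mathlib

open Function Matrix Finset

/-- The Cartan matrix of the Nakayama algebra with admissible sequence `p`:
`C a b = #{0 ≤ i < p a : a + i = b}`. -/
def cartanMatrix (n : ℕ) (p : ZMod n → ℕ) : Matrix (ZMod n) (ZMod n) ℤ :=
  fun a b => ((Finset.range (p a)).filter (fun i : ℕ => (a + (i : ZMod n) = b))).card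

/-- `I` is a cycle of the function `f`: the (finite) orbit of a periodic point. -/
def IsGammaCycle {α : Type*} [DecidableEq α] (f : α → α) (I : Finset α) : Prop :=
  ∃ a ∈ Function.periodicPts f,
    I = Finset.image (fun k => f^[k] a) (Finset.range (Function.minimalPeriod f a))

set_option linter.unusedSectionVars false

namespace Nak
variable {n : ℕ} [NeZero n] (p : ZMod n → ℕ)
def P (x : ℤ) : ℕ := p (x : ZMod n)
def g (x : ℤ) : ℤ := x + P p x
def gam : ZMod n → ZMod n := fun a => a + (p a : ZMod n)

lemma g_cast (x : ℤ) : ((g p x : ℤ) : ZMod n) = gam p (x : ZMod n) := by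
  simp [g, gam, P]

lemma g_iter_cast (k : ℕ) (x : ℤ) :
    (((g p)^[k] x : ℤ) : ZMod n) = (gam p)^[k] (x : ZMod n) := by
  induction k with
  | zero => simp
  | succ k ih => rw [Function.iterate_succ_apply', Function.iterate_succ_apply', g_cast, ih]

variable (hp1 : ∀ a, 1 ≤ p a) (hp2 : ∀ a, p a ≤ p (a + 1) + 1)

include hp1 in
lemma lt_g (x : ℤ) : x < g p x := by
  have h : 1 ≤ P p x := hp1 (x : ZMod n)
  simp only [g]; omega

include hp2 in
lemma g_mono : Monotone (g p) := by
  apply monotone_int_of_le_succ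
  intro x
  have h := hp2 (x : ZMod n)
  have hx : ((x : ZMod n) + 1) = ((x + 1 : ℤ) : ZMod n) := by push_cast; ring
  rw [hx] at h
  have h' : P p x ≤ P p (x + 1) + 1 := h
  simp only [g]; omega

lemma g_add_mul (x c : ℤ) : g p (x + c * n) = g p x + c * n := by
  have : P p (x + c * n) = P p x := by simp [P]
  simp only [g, this]; ring

lemma g_iter_add_mul (k : ℕ) (x c : ℤ) : (g p)^[k] (x + c * n) = (g p)^[k] x + c * n := by
  induction k with
  | zero => simp
  | succ k ih =>
      rw [Function.iterate_succ_apply', Function.iterate_succ_apply', ih, g_add_mul]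

lemma g_iter_sum (k : ℕ) (x : ℤ) :
    (g p)^[k] x = x + ∑ j ∈ Finset.range k, (P p ((g p)^[j] x) : ℤ) := by
  induction k with
  | zero => simp
  | succ k ih =>
      rw [Function.iterate_succ_apply', Finset.sum_range_succ]
      simp only [g]; omega

lemma tauSpec (m : ℤ) : ∃ k : ℕ, g p (m - 1 - k) < m := by
  refine ⟨(Finset.univ : Finset (ZMod n)).sup p, ?_⟩
  have h : P p (m - 1 - ((Finset.univ : Finset (ZMod n)).sup p : ℕ)) ≤
      (Finset.univ : Finset (ZMod n)).sup p :=
    Finset.le_sup (f := p) (Finset.mem_univ _)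
  simp only [g]
  omega

def tau (m : ℤ) : ℤ := m - Nat.find (tauSpec p m)

lemma g_tau_pred_lt (m : ℤ) : g p (tau p m - 1) < m := by
  have h := Nat.find_spec (tauSpec p m)
  have he : tau p m - 1 = m - 1 - (Nat.find (tauSpec p m) : ℤ) := by simp only [tau]; ring
  rw [he]; exact h

include hp1 in
lemma le_g_tau (m : ℤ) : m ≤ g p (tau p m) := by
  have hpos : 1 ≤ Nat.find (tauSpec p m) := by
    rw [Nat.one_le_iff_ne_zero]
    intro h0
    have h1 := Nat.find_spec (tauSpec p m)
    rw [h0] at h1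
    have h2 := lt_g p hp1 (m - 1)
    simp only [Nat.cast_zero, sub_zero] at h1
    omega
  have hmin := Nat.find_min (tauSpec p m) (m := Nat.find (tauSpec p m) - 1) (by omega)
  have hcast : ((Nat.find (tauSpec p m) - 1 : ℕ) : ℤ) = (Nat.find (tauSpec p m) : ℤ) - 1 := by
    push_cast [hpos]
    ring
  rw [hcast] at hmin
  have he : m - 1 - ((Nat.find (tauSpec p m) : ℤ) - 1) = tau p m := by simp only [tau]; ring
  rw [he] at hmin
  omega

include hp1 hp2 in
lemma tau_le_iff (m a : ℤ) : tau p m ≤ a ↔ m ≤ g p a := by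
  constructor
  · intro h
    exact le_trans (le_g_tau p hp1 m) (g_mono p hp2 h)
  · intro h
    by_contra hc
    push_neg at hc
    have h1 : g p a ≤ g p (tau p m - 1) := g_mono p hp2 (by omega)
    have h2 := g_tau_pred_lt p m
    omega

include hp1 hp2 in
lemma tau_mono (m m' : ℤ) (h : m ≤ m') : tau p m ≤ tau p m' := by
  rw [tau_le_iff p hp1 hp2]
  exact le_trans h (le_g_tau p hp1 m')

include hp1 hp2 in
lemma tau_add_mul (m c : ℤ) : tau p (m + c * n) = tau p m + c * n := by
  apply le_antisymm
  · rw [tau_le_iff p hp1 hp2]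
    have : g p (tau p m + c * n) = g p (tau p m) + c * n := g_add_mul p _ c
    have h2 := le_g_tau p hp1 m
    omega
  · have key : tau p m ≤ tau p (m + c * n) - c * n := by
      rw [tau_le_iff p hp1 hp2]
      have h1 : tau p (m + c * n) - c * n = tau p (m + c * n) + (-c) * n := by ring
      rw [h1, g_add_mul]
      have h2 := le_g_tau p hp1 (m + c * n)
      omega
    omega

include hp1 in
lemma tau_le_sub_one (m : ℤ) : tau p m ≤ m - 1 := by
  by_contra hc
  push_neg at hc
  have h1 := g_tau_pred_lt p m
  have h2 := lt_g p hp1 (tau p m - 1)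
  omega

include hp1 hp2 in
lemma tau_iter_le_iff (k : ℕ) (m a : ℤ) : (tau p)^[k] m ≤ a ↔ m ≤ (g p)^[k] a := by
  induction k generalizing m with
  | zero => simp
  | succ k ih =>
      rw [Function.iterate_succ_apply, Function.iterate_succ_apply', ih,
        ← tau_le_iff p hp1 hp2]


lemma periodicPts_iterate {α : Type*} {f : α → α} {x : α} (hx : x ∈ periodicPts f) (k : ℕ) :
    f^[k] x ∈ periodicPts f := by
  obtain ⟨m, hm, hper⟩ := hx
  exact ⟨m, hm, hper.apply_iterate k⟩

lemma gam_iter_periodic (a : ZMod n) : (gam p)^[n] a ∈ periodicPts (gam p) := by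
  have hcard : (Finset.univ : Finset (ZMod n)).card < (Finset.range (n + 1)).card := by
    simp [ZMod.card]
  obtain ⟨i, hi, j, hj, hij, he⟩ := Finset.exists_ne_map_eq_of_card_lt_of_maps_to hcard
    (f := fun k => (gam p)^[k] a) (fun k _ => Finset.mem_univ _)
  simp only [Finset.mem_range] at hi hj
  have key : ∀ i j : ℕ, i < j → i < n + 1 → j < n + 1 →
      (gam p)^[i] a = (gam p)^[j] a → (gam p)^[n] a ∈ periodicPts (gam p) := by
    intro i j hlt hi hj he
    have hper : IsPeriodicPt (gam p) (j - i) ((gam p)^[i] a) := by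
      show (gam p)^[j - i] ((gam p)^[i] a) = (gam p)^[i] a
      rw [← Function.iterate_add_apply]
      have h3 : j - i + i = j := by omega
      rw [h3, ← he]
    have hmem : (gam p)^[i] a ∈ periodicPts (gam p) := ⟨j - i, by omega, hper⟩
    have h4 : (gam p)^[n] a = (gam p)^[n - i] ((gam p)^[i] a) := by
      rw [← Function.iterate_add_apply]
      congr 1
      omega
    rw [h4]
    exact periodicPts_iterate hmem _
  rcases hij.lt_or_gt with hlt | hlt
  · exact key i j hlt hi hj he
  · exact key j i hlt hj hi he.symm

/-- the integer sum of `p` along one minimal period starting at `x`. -/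
noncomputable def S (x : ℤ) : ℤ :=
  ∑ k ∈ Finset.range (minimalPeriod (gam p) (x : ZMod n)), (P p ((g p)^[k] x) : ℤ)

lemma g_iter_minPeriod (x : ℤ) :
    (g p)^[minimalPeriod (gam p) (x : ZMod n)] x = x + S p x := by
  rw [g_iter_sum]; rfl

lemma dvd_S (x : ℤ) (hx : (x : ZMod n) ∈ periodicPts (gam p)) : (n : ℤ) ∣ S p x := by
  rw [← ZMod.intCast_zmod_eq_zero_iff_dvd]
  have h1 := g_iter_minPeriod p x
  have h2 : (((g p)^[minimalPeriod (gam p) (x : ZMod n)] x : ℤ) : ZMod n) = (x : ZMod n) := by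
    rw [g_iter_cast]
    exact iterate_minimalPeriod
  rw [h1] at h2
  push_cast at h2
  linear_combination h2

lemma S_add_mul (x c : ℤ) : S p (x + c * n) = S p x := by
  have hc : ((x + c * n : ℤ) : ZMod n) = (x : ZMod n) := by push_cast; simp
  simp only [S, hc, g_iter_add_mul]
  congr 1
  ext k
  congr 1
  simp [P]

lemma g_iter_mul_minPeriod (x : ℤ) (hx : (x : ZMod n) ∈ periodicPts (gam p)) (t : ℕ) :
    (g p)^[t * minimalPeriod (gam p) (x : ZMod n)] x = x + t * S p x := by
  induction t with
  | zero => simp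
  | succ t ih =>
      have : (t + 1) * minimalPeriod (gam p) (x : ZMod n)
          = t * minimalPeriod (gam p) (x : ZMod n) + minimalPeriod (gam p) (x : ZMod n) := by ring
      rw [this, Function.iterate_add_apply, g_iter_minPeriod]
      obtain ⟨c, hc⟩ := dvd_S p x hx
      have he : x + S p x = x + c * n := by rw [hc]; ring
      rw [he]
      rw [g_iter_add_mul]
      rw [ih]
      rw [hc]
      push_cast
      ring


lemma intCast_val (b : ZMod n) : (((b.val : ℕ) : ℤ) : ZMod n) = b := by
  rw [Int.cast_natCast, ZMod.natCast_val, ZMod.cast_id]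

section Weight

variable (s : ℚ)
variable (hS : ∀ x : ZMod n, x ∈ periodicPts (gam p) →
    s * (∑ k ∈ Finset.range (minimalPeriod (gam p) x), (p ((gam p)^[k] x) : ℚ))
      = n * (minimalPeriod (gam p) x))

noncomputable def K : ℕ := ∏ a : ZMod n, minimalPeriod (gam p) ((gam p)^[n] a)

lemma K_pos : 0 < K p :=
  Finset.prod_pos fun a _ =>
    minimalPeriod_pos_of_mem_periodicPts (gam_iter_periodic p a)

lemma minPeriod_dvd_K (x : ZMod n) (hx : x ∈ periodicPts (gam p)) :
    minimalPeriod (gam p) x ∣ K p := by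
  have h := minimalPeriod_apply_iterate hx n
  rw [← h]
  exact Finset.dvd_prod_of_mem _ (Finset.mem_univ x)

include hS in
lemma hS_S (x : ℤ) (hx : (x : ZMod n) ∈ periodicPts (gam p)) :
    s * ((S p x : ℤ) : ℚ) = n * (minimalPeriod (gam p) (x : ZMod n)) := by
  have h := hS (x : ZMod n) hx
  have hsum : ((S p x : ℤ) : ℚ)
      = ∑ k ∈ Finset.range (minimalPeriod (gam p) (x : ZMod n)),
          (p ((gam p)^[k] (x : ZMod n)) : ℚ) := by
    unfold S
    push_cast
    refine Finset.sum_congr rfl fun k _ => ?_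
    congr 1
    unfold P
    rw [g_iter_cast]
  rw [hsum, h]

include hS in
lemma stab (x : ℤ) (m : ℕ) (hm : n ≤ m) :
    s * ((((g p)^[m + K p] x : ℤ) : ℚ) - (((g p)^[m] x : ℤ) : ℚ)) = n * K p := by
  set y := (g p)^[m] x with hy_def
  have hy : (y : ZMod n) ∈ periodicPts (gam p) := by
    have h1 : (y : ZMod n) = (gam p)^[m - n] ((gam p)^[n] (x : ZMod n)) := by
      rw [hy_def, g_iter_cast, ← Function.iterate_add_apply]
      congr 1
      omega
    rw [h1]
    exact periodicPts_iterate (gam_iter_periodic p _) _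
  obtain ⟨t, ht⟩ := minPeriod_dvd_K p _ hy
  have h2 : (g p)^[m + K p] x = y + t * S p y := by
    rw [add_comm m (K p), Function.iterate_add_apply, ← hy_def, ht, mul_comm _ t]
    exact g_iter_mul_minPeriod p y hy t
  rw [h2]
  have h3 := hS_S p s hS y hy
  push_cast
  rw [ht]
  push_cast
  linear_combination (t : ℚ) * h3

noncomputable def A (x : ℤ) : ℚ :=
  (K p : ℚ)⁻¹ * ∑ j ∈ Finset.range (K p),
    ((s / n) * (((g p)^[n + j] x : ℤ) : ℚ) - ((n : ℚ) + j))

lemma sum_shift (F : ℕ → ℚ) (M : ℕ) :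
    ∑ j ∈ Finset.range M, F (j + 1) = ∑ j ∈ Finset.range M, F j + F M - F 0 := by
  have h1 := Finset.sum_range_succ' F M
  have h2 := Finset.sum_range_succ F M
  linarith

include hS in
lemma A_apply_g (x : ℤ) : A p s (g p x) = A p s x + 1 := by
  have hK0 : (K p : ℚ) ≠ 0 := Nat.cast_ne_zero.2 (K_pos p).ne'
  have hn0 : (n : ℚ) ≠ 0 := Nat.cast_ne_zero.2 (NeZero.ne n)
  have hstab := stab p s hS x n le_rfl
  set F : ℕ → ℚ := fun j => (s / n) * (((g p)^[n + j] x : ℤ) : ℚ) - ((n : ℚ) + j) with hF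
  have h1 : ∀ j ∈ Finset.range (K p),
      (s / n) * (((g p)^[n + j] (g p x) : ℤ) : ℚ) - ((n : ℚ) + j) = F (j + 1) + 1 := by
    intro j _
    have he : (g p)^[n + j] (g p x) = (g p)^[n + (j + 1)] x :=
      (Function.iterate_succ_apply (g p) (n + j) x).symm
    rw [he, hF]
    push_cast
    ring
  have hFK : F (K p) - F 0 = 0 := by
    have hdiv : (s / n) * ((((g p)^[n + K p] x : ℤ) : ℚ) - (((g p)^[n] x : ℤ) : ℚ))
        = (K p : ℚ) := by
      field_simp
      linear_combination hstab
    simp only [hF]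
    push_cast
    simp only [Nat.add_zero]
    linarith [hdiv]
  have : A p s (g p x) = (K p : ℚ)⁻¹ * ∑ j ∈ Finset.range (K p), (F (j + 1) + 1) := by
    unfold A
    congr 1
    exact Finset.sum_congr rfl h1
  rw [this, Finset.sum_add_distrib, sum_shift, Finset.sum_const, Finset.card_range,
    nsmul_eq_mul, mul_one]
  unfold A
  rw [hF]
  field_simp
  linear_combination hstab

lemma A_add_mul (x c : ℤ) : A p s (x + c * n) = A p s x + c * s := by
  have hK0 : (K p : ℚ) ≠ 0 := Nat.cast_ne_zero.2 (K_pos p).ne'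
  have hn0 : (n : ℚ) ≠ 0 := Nat.cast_ne_zero.2 (NeZero.ne n)
  unfold A
  have h1 : ∀ j ∈ Finset.range (K p),
      (s / n) * (((g p)^[n + j] (x + c * n) : ℤ) : ℚ) - ((n : ℚ) + j)
      = ((s / n) * (((g p)^[n + j] x : ℤ) : ℚ) - ((n : ℚ) + j)) + c * s := by
    intro j _
    rw [g_iter_add_mul]
    push_cast
    field_simp
    ring
  rw [Finset.sum_congr rfl h1, Finset.sum_add_distrib, Finset.sum_const, Finset.card_range,
    nsmul_eq_mul]
  rw [mul_add, ← mul_assoc, inv_mul_cancel₀ hK0, one_mul]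


noncomputable def Ad (x : ℤ) : ℚ := A p s (x + 1) - A p s x

lemma Ad_congr (x y : ℤ) (h : (x : ZMod n) = (y : ZMod n)) : Ad p s x = Ad p s y := by
  have hd : (n : ℤ) ∣ (y - x) := by
    rw [← ZMod.intCast_zmod_eq_zero_iff_dvd]
    push_cast
    rw [h]
    ring
  obtain ⟨c, hc⟩ := hd
  have h1 : y = x + c * n := by linear_combination hc
  unfold Ad
  rw [h1, show x + c * (n : ℤ) + 1 = (x + 1) + c * n by ring, A_add_mul, A_add_mul]
  ring

noncomputable def alpha : ZMod n → ℚ := fun b => Ad p s (b.val : ℤ)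

lemma alpha_cast (x : ℤ) : alpha p s ((x : ZMod n)) = Ad p s x := by
  unfold alpha
  exact Ad_congr p s _ x (intCast_val _)

lemma Ad_sum (m : ℕ) (x : ℤ) :
    ∑ i ∈ Finset.range m, Ad p s (x + i) = A p s (x + m) - A p s x := by
  induction m with
  | zero => simp
  | succ m ih =>
      rw [Finset.sum_range_succ, ih]
      unfold Ad
      have h1 : x + (m : ℤ) + 1 = x + ((m : ℕ) + 1 : ℕ) := by push_cast; ring
      rw [← h1]
      ring

include hS in
lemma row_sum (a : ZMod n) :
    ∑ b, ((cartanMatrix n p a b : ℤ) : ℚ) * alpha p s b = 1 := by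
  have hC : ∀ b, ((cartanMatrix n p a b : ℤ) : ℚ)
      = ∑ i ∈ Finset.range (p a), if a + (i : ZMod n) = b then (1 : ℚ) else 0 := by
    intro b
    unfold cartanMatrix
    rw [Finset.card_filter]
    push_cast
    exact Finset.sum_congr rfl fun i _ => by split_ifs <;> simp
  calc ∑ b, ((cartanMatrix n p a b : ℤ) : ℚ) * alpha p s b
      = ∑ b, ∑ i ∈ Finset.range (p a),
          (if a + (i : ZMod n) = b then alpha p s b else 0) := by
        refine Finset.sum_congr rfl fun b _ => ?_
        rw [hC, Finset.sum_mul]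
        exact Finset.sum_congr rfl fun i _ => by split_ifs <;> simp
    _ = ∑ i ∈ Finset.range (p a), ∑ b,
          (if a + (i : ZMod n) = b then alpha p s b else 0) := Finset.sum_comm
    _ = ∑ i ∈ Finset.range (p a), alpha p s (a + (i : ZMod n)) := by
        refine Finset.sum_congr rfl fun i _ => ?_
        simp [Finset.sum_ite_eq]
    _ = ∑ i ∈ Finset.range (p a), Ad p s ((a.val : ℤ) + i) := by
        refine Finset.sum_congr rfl fun i _ => ?_
        rw [← alpha_cast]
        congr 1
        push_cast [ZMod.natCast_val, ZMod.cast_id]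
        ring
    _ = A p s ((a.val : ℤ) + p a) - A p s (a.val : ℤ) := Ad_sum p s (p a) _
    _ = 1 := by
        have hg : (a.val : ℤ) + p a = g p (a.val : ℤ) := by
          unfold g P
          rw [intCast_val]
        rw [hg, A_apply_g p s hS]
        ring

include hS in
lemma sum_alpha : ∑ b, alpha p s b = s := by
  have h1 : ∑ b : ZMod n, alpha p s b = ∑ i ∈ Finset.range n, Ad p s ((0 : ℤ) + i) := by
    refine Finset.sum_nbij' (i := fun b => ZMod.val b) (j := fun i => (i : ZMod n))
      ?_ ?_ ?_ ?_ ?_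
    · intro b _
      exact Finset.mem_range.2 (ZMod.val_lt b)
    · intro i _
      exact Finset.mem_univ _
    · intro b _
      simp [ZMod.natCast_val, ZMod.cast_id]
    · intro i hi
      exact ZMod.val_cast_of_lt (Finset.mem_range.1 hi)
    · intro b _
      unfold alpha
      refine Ad_congr p s _ _ ?_
      push_cast
      ring
  rw [h1, Ad_sum]
  have h2 : (0 : ℤ) + n = 0 + 1 * n := by ring
  rw [h2, A_add_mul]
  ring

end Weight

/-! ### The dual admissible sequence -/

noncomputable def p' : ZMod n → ℕ :=
  fun a => ((1 - (a.val : ℤ)) - tau p (1 - (a.val : ℤ))).toNat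

include hp1 hp2 in
lemma p'_lift (x : ℤ) : ((p' p (x : ZMod n)) : ℤ) = (1 - x) - tau p (1 - x) := by
  have hvc : ((((x : ZMod n)).val : ℤ) : ZMod n) = (x : ZMod n) := intCast_val _
  have hd : (n : ℤ) ∣ (x - (((x : ZMod n)).val : ℤ)) := by
    rw [← ZMod.intCast_zmod_eq_zero_iff_dvd, Int.cast_sub, hvc, sub_self]
  obtain ⟨c, hc⟩ := hd
  have hx : 1 - x = (1 - (((x : ZMod n)).val : ℤ)) + (-c) * n := by linear_combination -hc
  have htau : tau p (1 - x) = tau p (1 - (((x : ZMod n)).val : ℤ)) + (-c) * n := by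
    rw [hx, tau_add_mul p hp1 hp2]
  have hpos : tau p (1 - (((x : ZMod n)).val : ℤ)) ≤ (1 - (((x : ZMod n)).val : ℤ)) - 1 :=
    tau_le_sub_one p hp1 _
  unfold p'
  rw [Int.toNat_of_nonneg (by omega)]
  omega

include hp1 in
lemma p'_ge_one : ∀ a, 1 ≤ p' p a := by
  intro a
  have h := tau_le_sub_one p hp1 (1 - (a.val : ℤ))
  unfold p'
  omega

include hp1 hp2 in
lemma p'_admissible : ∀ a, p' p a ≤ p' p (a + 1) + 1 := by
  intro a
  have h1 : ((p' p (((a.val : ℤ) : ZMod n))) : ℤ)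
      = (1 - (a.val : ℤ)) - tau p (1 - (a.val : ℤ)) := p'_lift p hp1 hp2 _
  have h2 : ((p' p ((((a.val : ℤ) + 1 : ℤ)) : ZMod n)) : ℤ)
      = (1 - ((a.val : ℤ) + 1)) - tau p (1 - ((a.val : ℤ) + 1)) := p'_lift p hp1 hp2 _
  have hax : (((a.val : ℤ)) : ZMod n) = a := intCast_val a
  have hax1 : ((((a.val : ℤ) + 1 : ℤ)) : ZMod n) = a + 1 := by push_cast [hax]; ring
  rw [hax] at h1
  rw [hax1] at h2
  have hm : tau p (1 - ((a.val : ℤ) + 1)) ≤ tau p (1 - (a.val : ℤ)) :=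
    tau_mono p hp1 hp2 _ _ (by omega)
  omega

include hp1 hp2 in
lemma g'_eq (x : ℤ) : g (p' p) x = 1 - tau p (1 - x) := by
  have h1 : ((P (p' p) x : ℕ) : ℤ) = (1 - x) - tau p (1 - x) := p'_lift p hp1 hp2 x
  unfold g
  omega

include hp1 hp2 in
lemma g'_iter (k : ℕ) (x : ℤ) : (g (p' p))^[k] x = 1 - (tau p)^[k] (1 - x) := by
  induction k with
  | zero => simp
  | succ k ih =>
      rw [Function.iterate_succ_apply', ih, g'_eq p hp1 hp2,
        Function.iterate_succ_apply']
      congr 1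
      ring_nf

/-! ### Cartan matrix counting lemmas -/

lemma cardA (q : ZMod n → ℕ) (x y : ℤ) :
    cartanMatrix n q ((x : ℤ) : ZMod n) ((y : ℤ) : ZMod n)
      = (((Finset.Ico x (g q x)).filter
          (fun z : ℤ => (z : ZMod n) = ((y : ℤ) : ZMod n))).card : ℤ) := by
  have hg : g q x = x + P q x := rfl
  have hq : q ((x : ℤ) : ZMod n) = P q x := rfl
  unfold cartanMatrix
  congr 1
  refine Finset.card_nbij' (i := fun (i : ℕ) => x + (i : ℤ)) (j := fun z => (z - x).toNat)
    ?_ ?_ ?_ ?_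
  · intro i hi
    simp only [Finset.mem_coe, Finset.mem_filter, Finset.mem_range, Finset.mem_Ico] at hi ⊢
    obtain ⟨hi1, hi2⟩ := hi
    rw [hq] at hi1
    refine ⟨⟨by omega, by omega⟩, ?_⟩
    push_cast
    linear_combination hi2
  · intro z hz
    simp only [Finset.mem_coe, Finset.mem_filter, Finset.mem_range, Finset.mem_Ico] at hz ⊢
    obtain ⟨⟨hz1, hz2⟩, hz3⟩ := hz
    rw [hq]
    constructor
    · omega
    · have h4 : (((z - x).toNat : ℕ) : ℤ) = z - x := Int.toNat_of_nonneg (by omega)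
      have h5 : (((z - x).toNat : ℕ) : ZMod n) = ((z - x : ℤ) : ZMod n) := by
        rw [← h4]
        exact (Int.cast_natCast _).symm
      show ((x : ℤ) : ZMod n) + (((z - x).toNat : ℕ) : ZMod n) = ((y : ℤ) : ZMod n)
      rw [h5]
      push_cast
      linear_combination hz3
  · intro i _
    show ((x + (i : ℤ)) - x).toNat = i
    omega
  · intro z hz
    simp only [Finset.mem_coe, Finset.mem_filter, Finset.mem_Ico] at hz
    show x + (((z - x).toNat : ℕ) : ℤ) = z
    omega

include hp1 hp2 in
lemma cardB (x y : ℤ) :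
    ((Finset.Ico x (g p x)).filter
        (fun z : ℤ => (z : ZMod n) = ((y : ℤ) : ZMod n))).card
      = ((Finset.Icc (tau p (y + 1)) y).filter
          (fun w : ℤ => (w : ZMod n) = ((x : ℤ) : ZMod n))).card := by
  refine Finset.card_nbij' (i := fun z => x + y - z) (j := fun w => x + y - w) ?_ ?_ ?_ ?_
  · intro z hz
    simp only [Finset.mem_coe, Finset.mem_filter, Finset.mem_Ico, Finset.mem_Icc] at hz ⊢
    obtain ⟨⟨hz1, hz2⟩, hz3⟩ := hz
    have hd : (n : ℤ) ∣ (y - z) := by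
      rw [← ZMod.intCast_zmod_eq_zero_iff_dvd, Int.cast_sub, hz3, sub_self]
    obtain ⟨c, hc⟩ := hd
    have h1 : y + 1 = (z + 1) + c * n := by linear_combination hc
    have h2 : tau p (y + 1) = tau p (z + 1) + c * n := by
      rw [h1, tau_add_mul p hp1 hp2]
    have h3 : tau p (z + 1) ≤ x := by
      rw [tau_le_iff p hp1 hp2]
      omega
    refine ⟨⟨by omega, by omega⟩, ?_⟩
    push_cast
    rw [hz3]
    ring
  · intro w hw
    simp only [Finset.mem_coe, Finset.mem_filter, Finset.mem_Ico, Finset.mem_Icc] at hw ⊢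
    obtain ⟨⟨hw1, hw2⟩, hw3⟩ := hw
    have hd : (n : ℤ) ∣ (x - w) := by
      rw [← ZMod.intCast_zmod_eq_zero_iff_dvd, Int.cast_sub, hw3, sub_self]
    obtain ⟨c, hc⟩ := hd
    have h1 : (x + y - w) + 1 = (y + 1) + c * n := by linear_combination hc
    have h2 : tau p ((x + y - w) + 1) = tau p (y + 1) + c * n := by
      rw [h1, tau_add_mul p hp1 hp2]
    have h3 : x + y - w < g p x := by
      have h4 : tau p ((x + y - w) + 1) ≤ x := by omega
      rw [tau_le_iff p hp1 hp2] at h4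
      omega
    refine ⟨⟨by omega, h3⟩, ?_⟩
    push_cast
    rw [hw3]
    ring
  · intro z _
    ring
  · intro w _
    ring

lemma cardNeg (u v : ℤ) (w : ZMod n) :
    ((Finset.Ico u v).filter (fun z : ℤ => (z : ZMod n) = w)).card
      = ((Finset.Icc (1 - v) (-u)).filter (fun z : ℤ => (z : ZMod n) = -w)).card := by
  refine Finset.card_nbij' (i := fun z => -z) (j := fun z => -z) ?_ ?_ ?_ ?_
  · intro z hz
    simp only [Finset.mem_coe, Finset.mem_filter, Finset.mem_Ico, Finset.mem_Icc] at hz ⊢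
    refine ⟨⟨by omega, by omega⟩, ?_⟩
    push_cast
    linear_combination -hz.2
  · intro z hz
    simp only [Finset.mem_coe, Finset.mem_filter, Finset.mem_Ico, Finset.mem_Icc] at hz ⊢
    refine ⟨⟨by omega, by omega⟩, ?_⟩
    push_cast
    linear_combination -hz.2
  · intro z _
    ring
  · intro z _
    ring

include hp1 hp2 in
lemma cartan_dual (a b : ZMod n) :
    cartanMatrix n (p' p) a b = cartanMatrix n p (-b) (-a) := by
  have ha : (((a.val : ℤ)) : ZMod n) = a := intCast_val a
  have hb : (((b.val : ℤ)) : ZMod n) = b := intCast_val b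
  have hna : ((-(a.val : ℤ) : ℤ) : ZMod n) = -a := by push_cast [ha]; ring
  have hnb : ((-(b.val : ℤ) : ℤ) : ZMod n) = -b := by push_cast [hb]; ring
  have h1 : cartanMatrix n (p' p) a b
      = (((Finset.Ico (a.val : ℤ) (g (p' p) (a.val : ℤ))).filter
          (fun z : ℤ => (z : ZMod n) = b)).card : ℤ) := by
    conv_lhs => rw [← ha, ← hb]
    rw [cardA (p' p) (a.val : ℤ) (b.val : ℤ)]
    congr 2
    exact Finset.filter_congr fun z _ => by rw [hb]
  rw [h1, g'_eq p hp1 hp2]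
  have h3 := cardNeg (u := (a.val : ℤ)) (v := 1 - tau p (1 - (a.val : ℤ))) (w := b)
  rw [h3]
  have h4 : 1 - (1 - tau p (1 - (a.val : ℤ))) = tau p (-(a.val : ℤ) + 1) := by ring_nf
  rw [h4]
  have h5 : cartanMatrix n p (-b) (-a)
      = (((Finset.Ico (-(b.val : ℤ)) (g p (-(b.val : ℤ)))).filter
          (fun z : ℤ => (z : ZMod n) = -a)).card : ℤ) := by
    conv_lhs => rw [← hnb, ← hna]
    rw [cardA p (-(b.val : ℤ)) (-(a.val : ℤ))]
    congr 2
    exact Finset.filter_congr fun z _ => by rw [hna]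
  rw [h5]
  have h6 := cardB p hp1 hp2 (-(b.val : ℤ)) (-(a.val : ℤ))
  have h7 : cartanMatrix n p (-b) (-a) = cartanMatrix n p (-b) (-a) := rfl
  congr 1
  calc ((Finset.Icc (tau p (-(a.val : ℤ) + 1)) (-(a.val : ℤ))).filter
          (fun z : ℤ => (z : ZMod n) = -b)).card
      = ((Finset.Icc (tau p (-(a.val : ℤ) + 1)) (-(a.val : ℤ))).filter
          (fun w : ℤ => (w : ZMod n) = ((-(b.val : ℤ) : ℤ) : ZMod n))).card := by
        congr 1
        exact Finset.filter_congr fun z _ => by rw [hnb]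
    _ = ((Finset.Ico (-(b.val : ℤ)) (g p (-(b.val : ℤ)))).filter
          (fun z : ℤ => (z : ZMod n) = ((-(a.val : ℤ) : ℤ) : ZMod n))).card := h6.symm
    _ = ((Finset.Ico (-(b.val : ℤ)) (g p (-(b.val : ℤ)))).filter
          (fun z : ℤ => (z : ZMod n) = -a)).card := by
        congr 1
        exact Finset.filter_congr fun z _ => by rw [hna]

lemma S_cast (q : ZMod n → ℕ) (x : ℤ) :
    ((S q x : ℤ) : ℚ) = ∑ k ∈ Finset.range (minimalPeriod (gam q) (x : ZMod n)),
      (q ((gam q)^[k] (x : ZMod n)) : ℚ) := by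
  unfold S
  push_cast
  refine Finset.sum_congr rfl fun k _ => ?_
  congr 1
  unfold P
  rw [g_iter_cast]

lemma le_of_thresholds (d U V : ℤ)
    (h : ∀ t : ℕ, ∀ c : ℤ, d - c * n ≤ (t : ℤ) * U → d - c * n ≤ (t : ℤ) * V) : U ≤ V := by
  by_contra hcon
  push_neg at hcon
  have hn1 : 1 ≤ (n : ℤ) := by exact_mod_cast Nat.pos_of_ne_zero (NeZero.ne n)
  have hdm := Int.mul_ediv_add_emod (d - (n : ℤ) * V - 1) n
  have hr0 : 0 ≤ (d - (n : ℤ) * V - 1) % n := Int.emod_nonneg _ (by omega)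
  have hrn : (d - (n : ℤ) * V - 1) % n < n := Int.emod_lt_of_pos _ (by omega)
  set c : ℤ := (d - (n : ℤ) * V - 1) / n with hc
  have hx : d - c * n = (n : ℤ) * V + 1 + (d - (n : ℤ) * V - 1) % n := by
    linear_combination -hdm
  have hm : (n : ℤ) * (V + 1) ≤ (n : ℤ) * U :=
    mul_le_mul_of_nonneg_left (by omega) (by omega)
  have hexp : (n : ℤ) * (V + 1) = (n : ℤ) * V + n := by ring
  have h1 : d - c * n ≤ ((n : ℕ) : ℤ) * U := by push_cast; omega
  have h2 := h n c h1
  push_cast at h2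
  omega

include hp1 hp2 in
lemma cycle_ratio (x' : ZMod n) (hx' : x' ∈ periodicPts (gam (p' p)))
    (b : ZMod n) (hb : b ∈ periodicPts (gam p)) :
    (minimalPeriod (gam p) b : ℤ) * S (p' p) ((x'.val : ℤ))
      = (minimalPeriod (gam (p' p)) x' : ℤ) * S p ((b.val : ℤ)) := by
  have hyb : (((b.val : ℤ)) : ZMod n) = b := intCast_val b
  have hxx : (((x'.val : ℤ)) : ZMod n) = x' := intCast_val x'
  set L : ℕ := minimalPeriod (gam p) b with hL
  set L' : ℕ := minimalPeriod (gam (p' p)) x' with hL'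
  set y0 : ℤ := (b.val : ℤ) with hy0
  set x0 : ℤ := (x'.val : ℤ) with hx0
  set Sy : ℤ := S p y0 with hSy
  set Sx : ℤ := S (p' p) x0 with hSx
  have hyper : ((y0 : ℤ) : ZMod n) ∈ periodicPts (gam p) := by rw [hyb]; exact hb
  have hxper : ((x0 : ℤ) : ZMod n) ∈ periodicPts (gam (p' p)) := by rw [hxx]; exact hx'
  have hgy : ∀ t : ℕ, (g p)^[t * L] y0 = y0 + t * Sy := by
    intro t
    have h := g_iter_mul_minPeriod p y0 hyper t
    rw [hyb] at h
    exact h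
  have hgx : ∀ t : ℕ, (g (p' p))^[t * L'] x0 = x0 + t * Sx := by
    intro t
    have h := g_iter_mul_minPeriod (p' p) x0 hxper t
    rw [hxx] at h
    exact h
  set d : ℤ := (1 - x0) - y0 with hd
  have key : ∀ (t : ℕ) (c : ℤ),
      d - c * n ≤ (t : ℤ) * ((L : ℤ) * Sx) ↔ d - c * n ≤ (t : ℤ) * ((L' : ℤ) * Sy) := by
    intro t c
    have hiter := tau_iter_le_iff p hp1 hp2 (t * L * L') (1 - x0) (y0 + c * n)
    have e1 : (tau p)^[t * L * L'] (1 - x0) = 1 - x0 - ((t : ℤ) * ((L : ℤ) * Sx)) := by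
      have h1 : (tau p)^[t * L * L'] (1 - x0) = 1 - (g (p' p))^[t * L * L'] x0 := by
        rw [g'_iter p hp1 hp2]
        ring_nf
      have h2 : t * L * L' = (t * L) * L' := by ring
      rw [h1, h2, hgx (t * L)]
      push_cast
      ring
    have e2 : (g p)^[t * L * L'] (y0 + c * n)
        = y0 + ((t : ℤ) * ((L' : ℤ) * Sy)) + c * n := by
      rw [g_iter_add_mul]
      have h2 : t * L * L' = (t * L') * L := by ring
      rw [h2, hgy (t * L')]
      push_cast
      ring
    rw [e1, e2] at hiter
    constructor
    · intro hle
      have := hiter.mp (by linarith)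
      linarith
    · intro hle
      have := hiter.mpr (by linarith)
      linarith
  have hUV : (L : ℤ) * Sx ≤ (L' : ℤ) * Sy :=
    le_of_thresholds d _ _ (fun t c hle => (key t c).mp hle)
  have hVU : (L' : ℤ) * Sy ≤ (L : ℤ) * Sx :=
    le_of_thresholds d _ _ (fun t c hle => (key t c).mpr hle)
  exact le_antisymm hUV hVU

end Nak

open Nak

/-- the Cartan matrix of a Nakayama algebra has magnitude `p̄ / w`
in `ℚ`, where `p̄` is the common length and `w` the common weight of the cycles
of the resolution quiver. -/
theorem nakayama_magnitude (n : ℕ) [NeZero n] (p : ZMod n → ℕ)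
    (hp1 : ∀ a, 1 ≤ p a) (hp2 : ∀ a, p a ≤ p (a + 1) + 1)
    (pbar w : ℕ)
    (hpbar : ∀ I : Finset (ZMod n),
      IsGammaCycle (fun a => a + (p a : ZMod n)) I → I.card = pbar)
    (hw : ∀ I : Finset (ZMod n),
      IsGammaCycle (fun a => a + (p a : ZMod n)) I → ∑ a ∈ I, p a = n * w) :
    ∃ α β : ZMod n → ℚ,
      ((cartanMatrix n p).map (Int.cast : ℤ → ℚ)).mulVec α = (fun _ => 1) ∧
      Matrix.vecMul β ((cartanMatrix n p).map (Int.cast : ℤ → ℚ)) = (fun _ => 1) ∧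
      ∑ a, α a = (pbar : ℚ) / w ∧ ∑ a, β a = (pbar : ℚ) / w := by
  classical
  have hcyc : ∀ x : ZMod n, x ∈ Function.periodicPts (gam p) →
      Function.minimalPeriod (gam p) x = pbar ∧
      (∑ k ∈ Finset.range (Function.minimalPeriod (gam p) x), p ((gam p)^[k] x)) = n * w := by
    intro x hx
    have hinjOn : Set.InjOn (fun k => (gam p)^[k] x)
        ↑(Finset.range (Function.minimalPeriod (gam p) x)) := by
      rw [Finset.coe_range]
      exact Function.iterate_injOn_Iio_minimalPeriod
    have hinj : ∀ i ∈ Finset.range (Function.minimalPeriod (gam p) x),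
        ∀ j ∈ Finset.range (Function.minimalPeriod (gam p) x),
        (gam p)^[i] x = (gam p)^[j] x → i = j :=
      fun i hi j hj hij => hinjOn (Finset.mem_coe.2 hi) (Finset.mem_coe.2 hj) hij
    have hcycI : IsGammaCycle (fun a => a + (p a : ZMod n))
        (Finset.image (fun k => (gam p)^[k] x)
          (Finset.range (Function.minimalPeriod (gam p) x))) := ⟨x, hx, rfl⟩
    constructor
    · rw [← hpbar _ hcycI, Finset.card_image_of_injOn hinjOn, Finset.card_range]
    · rw [← hw _ hcycI, Finset.sum_image hinj]
  have hb0 : (gam p)^[n] (0 : ZMod n) ∈ Function.periodicPts (gam p) := gam_iter_periodic p 0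
  obtain ⟨hL0, hsum0⟩ := hcyc _ hb0
  have hLpos : 0 < Function.minimalPeriod (gam p) ((gam p)^[n] (0 : ZMod n)) :=
    Function.minimalPeriod_pos_of_mem_periodicPts hb0
  have hpbarpos : 0 < pbar := hL0 ▸ hLpos
  have hwpos : 0 < w := by
    rcases Nat.eq_zero_or_pos w with h0 | h
    · exfalso
      rw [h0, Nat.mul_zero] at hsum0
      have hge : Function.minimalPeriod (gam p) ((gam p)^[n] (0 : ZMod n))
          ≤ ∑ k ∈ Finset.range (Function.minimalPeriod (gam p) ((gam p)^[n] (0 : ZMod n))),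
              p ((gam p)^[k] ((gam p)^[n] (0 : ZMod n))) := by
        calc Function.minimalPeriod (gam p) ((gam p)^[n] (0 : ZMod n))
            = ∑ _k ∈ Finset.range (Function.minimalPeriod (gam p)
                ((gam p)^[n] (0 : ZMod n))), 1 := by
              rw [Finset.sum_const, Finset.card_range, smul_eq_mul, mul_one]
          _ ≤ _ := Finset.sum_le_sum (fun k _ => hp1 _)
      omega
    · exact h
  set s : ℚ := (pbar : ℚ) / w with hs
  have hw0 : (w : ℚ) ≠ 0 := Nat.cast_ne_zero.2 hwpos.ne'
  have hS : ∀ x : ZMod n, x ∈ Function.periodicPts (gam p) →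
      s * (∑ k ∈ Finset.range (Function.minimalPeriod (gam p) x),
          (p ((gam p)^[k] x) : ℚ)) = n * (Function.minimalPeriod (gam p) x) := by
    intro x hx
    obtain ⟨hL, hsum⟩ := hcyc x hx
    have hsumQ : (∑ k ∈ Finset.range (Function.minimalPeriod (gam p) x),
        (p ((gam p)^[k] x) : ℚ)) = (n : ℚ) * w := by exact_mod_cast hsum
    rw [hsumQ, hL, hs]
    field_simp
  have hrow := row_sum p s hS
  have hsumα := sum_alpha p s hS
  -- second periodic-point data for the dual argument
  have hSyQ : ((S p ((((gam p)^[n] (0 : ZMod n)).val : ℤ)) : ℤ) : ℚ) = (n : ℚ) * w := by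
    rw [S_cast, intCast_val]
    exact_mod_cast hsum0
  have hsSy : s * ((S p ((((gam p)^[n] (0 : ZMod n)).val : ℤ)) : ℤ) : ℚ) = (n : ℚ) * pbar := by
    rw [hSyQ, hs]
    field_simp
  have hS' : ∀ x : ZMod n, x ∈ Function.periodicPts (gam (p' p)) →
      s * (∑ k ∈ Finset.range (Function.minimalPeriod (gam (p' p)) x),
          ((p' p) ((gam (p' p))^[k] x) : ℚ))
        = n * (Function.minimalPeriod (gam (p' p)) x) := by
    intro x' hx'
    have hratio := cycle_ratio p hp1 hp2 x' hx' _ hb0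
    rw [hL0] at hratio
    have hrQ : (pbar : ℚ) * ((S (p' p) ((x'.val : ℤ)) : ℤ) : ℚ)
        = ((Function.minimalPeriod (gam (p' p)) x' : ℕ) : ℚ)
          * ((S p ((((gam p)^[n] (0 : ZMod n)).val : ℤ)) : ℤ) : ℚ) := by
      exact_mod_cast hratio
    have hpbar0 : ((pbar : ℚ)) ≠ 0 := Nat.cast_ne_zero.2 hpbarpos.ne'
    have hgoal : s * ((S (p' p) ((x'.val : ℤ)) : ℤ) : ℚ)
        = n * (Function.minimalPeriod (gam (p' p)) x') := by
      apply mul_left_cancel₀ hpbar0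
      linear_combination s * hrQ
        + ((Function.minimalPeriod (gam (p' p)) x' : ℕ) : ℚ) * hsSy
    rw [S_cast (p' p) ((x'.val : ℤ)), intCast_val] at hgoal
    exact hgoal
  have hrow' := row_sum (p' p) s hS'
  have hsumβ' := sum_alpha (p' p) s hS'
  refine ⟨alpha p s, fun a => alpha (p' p) s (-a), ?_, ?_, ?_, ?_⟩
  · funext a
    simp only [Matrix.mulVec, dotProduct, Matrix.map_apply]
    exact hrow a
  · funext b
    simp only [Matrix.vecMul, dotProduct, Matrix.map_apply]
    calc ∑ a, alpha (p' p) s (-a) * ((cartanMatrix n p a b : ℤ) : ℚ)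
        = ∑ a, ((cartanMatrix n (p' p) (-b) (-a) : ℤ) : ℚ) * alpha (p' p) s (-a) := by
          refine Finset.sum_congr rfl fun a _ => ?_
          rw [cartan_dual p hp1 hp2 (-b) (-a), neg_neg, neg_neg, mul_comm]
      _ = ∑ a, ((cartanMatrix n (p' p) (-b) a : ℤ) : ℚ) * alpha (p' p) s a := by
          refine Fintype.sum_equiv (Equiv.neg (ZMod n)) _ _ fun a => ?_
          simp [Equiv.neg_apply]
      _ = 1 := hrow' (-b)
  · exact hsumα
  · calc ∑ a, alpha (p' p) s (-a) = ∑ a, alpha (p' p) s a := by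
          refine Fintype.sum_equiv (Equiv.neg (ZMod n)) _ _ fun a => ?_
          simp [Equiv.neg_apply]
      _ = s := hsumβ'
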